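/- arXiv:1001.5140 — 4 statements merged into one kernel-verified Lean document; each statement's English description precedes it below -/
import Mathlib

section
/- Every Jordan domain in X coincides with the interior of its closure: if D is a connected component of X − C for some simple closed curve C, then D = Interior(Closure(D)). -/
open Set Topology

abbrev Sphere2 : Type := ↥(Metric.sphere (0 : EuclideanSpace ℝ (Fin 3)) 1)
abbrev Circle1 : Type := ↥(Metric.sphere (0 : EuclideanSpace ℝ (Fin 2)) 1)

/-- A simple closed curve: the image of an injective continuous map from the circle. -/
def IsSimpleClosedCurve {X : Type*} [TopologicalSpace X] (C : Set X) : Prop :=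
  ∃ f : Circle1 → X, Continuous f ∧ Function.Injective f ∧ Set.range f = C

/-- `D` is a connected component of the set `S`. -/
def IsComponentOf {X : Type*} [TopologicalSpace X] (D S : Set X) : Prop :=
  ∃ x ∈ S, D = connectedComponentIn S x

/-- A Jordan domain: a connected component of the complement of some simple closed curve. -/
def IsJordanDomain {X : Type*} [TopologicalSpace X] (D : Set X) : Prop :=
  ∃ C : Set X, IsSimpleClosedCurve C ∧ IsComponentOf D Cᶜ

/-- The Jordan domain axiom: the complement of every simple closed curve `C` has exactly
two connected components, and the boundary of each of them equals `C`. -/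
def JordanDomainAxiom (X : Type*) [TopologicalSpace X] : Prop :=
  ∀ C : Set X, IsSimpleClosedCurve C →
    (∃ D₁ D₂ : Set X, D₁ ≠ D₂ ∧ {D | IsComponentOf D Cᶜ} = {D₁, D₂}) ∧
    (∀ D : Set X, IsComponentOf D Cᶜ → frontier D = C)

/-- The Basis axiom: there is a countable basis of the topology consisting of Jordan domains. -/
def BasisAxiom (X : Type*) [TopologicalSpace X] : Prop :=
  ∃ B : Set (Set X), B.Countable ∧ TopologicalSpace.IsTopologicalBasis B ∧
    ∀ U ∈ B, IsJordanDomain U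

/-- A simple curve with endpoints `a` and `b`: the image of an injective continuous map
`α : [0,1] → X` with `α 0 = a` and `α 1 = b`. -/
def IsSimpleCurve {X : Type*} [TopologicalSpace X] (K : Set X) (a b : X) : Prop :=
  ∃ α : unitInterval → X, Continuous α ∧ Function.Injective α ∧
    Set.range α = K ∧ α 0 = a ∧ α 1 = b

/-- Every Jordan domain coincides with the interior of its closure. -/
theorem jordanDomain_eq_interior_closure {X : Type*} [TopologicalSpace X] [CompactSpace X]
    [ConnectedSpace X] [LocallyPathConnectedSpace X] [T2Space X]
    (hJ : JordanDomainAxiom X) (hB : BasisAxiom X)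
    (C D : Set X) (hC : IsSimpleClosedCurve C) (hD : IsComponentOf D Cᶜ) :
    D = interior (closure D) := by
  -- C is compact, hence closed; so Cᶜ is open and D is open.
  obtain ⟨f, hf, hfinj, hfr⟩ := hC
  have hCclosed : IsClosed C := by
    rw [← hfr]
    exact (isCompact_range hf).isClosed
  have hCopen : IsOpen Cᶜ := hCclosed.isOpen_compl
  obtain ⟨x, hx, hDeq⟩ := hD
  have hDopen : IsOpen D := hDeq ▸ hCopen.connectedComponentIn
  have hfront : frontier D = C := (hJ C ⟨f, hf, hfinj, hfr⟩).2 D ⟨x, hx, hDeq⟩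
  apply Subset.antisymm
  · exact interior_maximal subset_closure hDopen
  · intro y hy
    by_contra hyD
    have hycl : y ∈ closure D := interior_subset hy
    have hyC : y ∈ C := by
      have : closure D ⊆ D ∪ C := by
        rw [← hfront]
        intro z hz
        rcases em (z ∈ D) with h | h
        · exact Or.inl h
        · exact Or.inr ⟨hz, fun hzi => h (interior_subset hzi)⟩
      rcases this hycl with h | h
      · exact absurd h hyD
      · exact h
    -- take the other component D'
    obtain ⟨D₁, D₂, hne, hset⟩ := (hJ C ⟨f, hf, hfinj, hfr⟩).1
    have hDmem : D ∈ ({D₁, D₂} : Set (Set X)) := hset ▸ ⟨x, hx, hDeq⟩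
    have hD1mem : IsComponentOf D₁ Cᶜ := by
      have : D₁ ∈ ({D₁, D₂} : Set (Set X)) := Or.inl rfl
      rw [← hset] at this; exact this
    have hD2mem : IsComponentOf D₂ Cᶜ := by
      have : D₂ ∈ ({D₁, D₂} : Set (Set X)) := Or.inr rfl
      rw [← hset] at this; exact this
    obtain ⟨D', hD'mem, hDD'⟩ : ∃ D', IsComponentOf D' Cᶜ ∧ D' ≠ D := by
      rcases hDmem with h | h
      · exact ⟨D₂, hD2mem, fun he => hne (h ▸ he.symm)⟩
      · exact ⟨D₁, hD1mem, fun he => hne (he.trans h)⟩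
    obtain ⟨x', hx', hD'eq⟩ := hD'mem
    have hfront' : frontier D' = C := (hJ C ⟨f, hf, hfinj, hfr⟩).2 D' ⟨x', hx', hD'eq⟩
    have hycl' : y ∈ closure D' := by
      rw [← hfront'] at hyC; exact hyC.1
    -- interior (closure D) is an open nbhd of y, so it meets D'
    obtain ⟨z, hzi, hzD'⟩ := mem_closure_iff.mp hycl' _ isOpen_interior hy
    have hz1 : z ∈ D ∪ C := by
      have : closure D ⊆ D ∪ C := by
        rw [← hfront]
        intro w hw
        rcases em (w ∈ D) with h | h
        · exact Or.inl h
        · exact Or.inr ⟨hw, fun hwi => h (interior_subset hwi)⟩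
      exact this (interior_subset hzi)
    have hzC : z ∉ C := by
      have : D' ⊆ Cᶜ := hD'eq ▸ connectedComponentIn_subset _ _
      exact this hzD'
    have hzD : z ∈ D := hz1.resolve_right hzC
    -- but D and D' are disjoint
    apply hDD'
    rw [hD'eq, hDeq]
    calc connectedComponentIn Cᶜ x' = connectedComponentIn Cᶜ z := by
          rw [connectedComponentIn_eq (show z ∈ connectedComponentIn Cᶜ x' from hD'eq ▸ hzD')]
      _ = connectedComponentIn Cᶜ x := (connectedComponentIn_eq (show z ∈ connectedComponentIn Cᶜ x from hDeq ▸ hzD)).symm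
end

section
/- No proper arc of a simple closed curve separates X: if C is a simple closed curve in X, parameterized by an injective continuous map γ : S¹ → X, and A = γ(J) is the image of a proper closed arc J ⊊ S¹, then the complement X − A is connected. -/
open Set Topology

/-- No proper arc of a simple closed curve separates `X`. -/
theorem proper_arc_not_separating {X : Type*} [TopologicalSpace X] [CompactSpace X]
    [ConnectedSpace X] [LocallyPathConnectedSpace X] [T2Space X]
    (hJ : JordanDomainAxiom X) (hB : BasisAxiom X)
    (γ : Circle1 → X) (hγc : Continuous γ) (hγi : Function.Injective γ)
    (J : Set Circle1) (hJcl : IsClosed J) (hJconn : IsPreconnected J) (hJprop : J ≠ Set.univ) :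
    IsConnected (γ '' J)ᶜ := by
  set C : Set X := Set.range γ with hC
  have hSCC : IsSimpleClosedCurve C := ⟨γ, hγc, hγi, rfl⟩
  obtain ⟨⟨D₁, D₂, hne, hset⟩, hfr⟩ := hJ C hSCC
  set A : Set X := γ '' J with hA
  obtain ⟨z, hz⟩ : ∃ z, z ∉ J := by
    by_contra h; push_neg at h
    exact hJprop (Set.eq_univ_of_forall h)
  have hzA : γ z ∈ C \ A := by
    refine ⟨Set.mem_range_self z, ?_⟩
    rintro ⟨j, hj, hje⟩
    exact hz (hγi hje ▸ hj)
  have hAC : A ⊆ C := Set.image_subset_range γ J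
  have hD₁ : IsComponentOf D₁ Cᶜ := by
    have h : D₁ ∈ ({D₁, D₂} : Set (Set X)) := by simp
    rw [← hset] at h; exact h
  have hD₂ : IsComponentOf D₂ Cᶜ := by
    have h : D₂ ∈ ({D₁, D₂} : Set (Set X)) := by simp
    rw [← hset] at h; exact h
  have key : ∀ D : Set X, IsComponentOf D Cᶜ →
      IsPreconnected (D ∪ (C \ A)) ∧ γ z ∈ D ∪ (C \ A) ∧ D ∪ (C \ A) ⊆ Aᶜ := by
    intro D hD
    obtain ⟨x, hx, hDx⟩ := hD
    have hDpre : IsPreconnected D := hDx ▸ isPreconnected_connectedComponentIn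
    have hDsub : D ⊆ Cᶜ := hDx ▸ connectedComponentIn_subset _ _
    have hCl : C ⊆ closure D := by
      have h := hfr D ⟨x, hx, hDx⟩
      rw [← h]; exact (frontier_subset_closure : frontier D ⊆ closure D)
    refine ⟨?_, Or.inr hzA, ?_⟩
    · exact hDpre.subset_closure Set.subset_union_left
        (Set.union_subset subset_closure (fun y hy => hCl hy.1))
    · intro y hy
      rcases hy with hy | hy
      · exact fun hyA => hDsub hy (hAC hyA)
      · exact hy.2
  obtain ⟨h1, hz1, hs1⟩ := key D₁ hD₁
  obtain ⟨h2, hz2, hs2⟩ := key D₂ hD₂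
  have heq : Aᶜ = (D₁ ∪ (C \ A)) ∪ (D₂ ∪ (C \ A)) := by
    apply Set.Subset.antisymm
    · intro y hy
      by_cases hyC : y ∈ C
      · exact Or.inl (Or.inr ⟨hyC, hy⟩)
      · have hcomp : IsComponentOf (connectedComponentIn Cᶜ y) Cᶜ := ⟨y, hyC, rfl⟩
        have hmem2 : connectedComponentIn Cᶜ y ∈ ({D₁, D₂} : Set (Set X)) := hset ▸ hcomp
        have hyc' : y ∈ Cᶜ := hyC
        have hmem := mem_connectedComponentIn hyc'
        rcases hmem2 with h | h
        · exact Or.inl (Or.inl (h ▸ hmem))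
        · exact Or.inr (Or.inl (h ▸ hmem))
    · exact Set.union_subset hs1 hs2
  have : (γ '' J)ᶜ = (D₁ ∪ (C \ A)) ∪ (D₂ ∪ (C \ A)) := heq
  rw [this]
  exact ⟨⟨γ z, Or.inl hz1⟩, IsPreconnected.union (γ z) hz1 hz2 h1 h2⟩
end

section
/- Let U be a Jordan domain in X, and let C be a simple closed curve contained in the closure of U. Then one of the two Jordan domains bounded by C is contained in U; that is, there exists a connected component V of X − C with V ⊆ U. -/
open Set Topology

/-- If `C` is a simple closed curve contained in the closure of a Jordan domain `U`, then one
of the two Jordan domains bounded by `C` is contained in `U`. -/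
theorem jordanDomain_subset {X : Type*} [TopologicalSpace X] [CompactSpace X]
    [ConnectedSpace X] [LocallyPathConnectedSpace X] [T2Space X]
    (hJ : JordanDomainAxiom X) (hB : BasisAxiom X)
    (U : Set X) (hU : IsJordanDomain U)
    (C : Set X) (hC : IsSimpleClosedCurve C) (hCU : C ⊆ closure U) :
    ∃ V : Set X, IsComponentOf V Cᶜ ∧ V ⊆ U := by
  classical
  obtain ⟨Γ, hΓ, u, huΓ, hUeq⟩ := hU
  -- the two components of Γᶜ and the frontier property
  obtain ⟨⟨E₁, E₂, hE, hEset⟩, hfrΓ⟩ := hJ Γ hΓ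
  obtain ⟨⟨F₁, F₂, hF, hFset⟩, hfrC⟩ := hJ C hC
  have hUcomp : IsComponentOf U Γᶜ := ⟨u, huΓ, hUeq⟩
  have hUmem : U ∈ ({E₁, E₂} : Set (Set X)) := by rw [← hEset]; exact hUcomp
  -- get the other component W of Γᶜ, with {E₁,E₂} = {U, W}
  obtain ⟨W, hWU, hWcomp, hpair⟩ :
      ∃ W, W ≠ U ∧ IsComponentOf W Γᶜ ∧ ({E₁, E₂} : Set (Set X)) = {U, W} := by
    rcases hUmem with h | h
    · refine ⟨E₂, by rw [← h] at hE; exact fun e => hE e.symm, ?_, by rw [h]⟩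
      have : E₂ ∈ ({E₁, E₂} : Set (Set X)) := Or.inr rfl
      rwa [← hEset] at this
    · rw [mem_singleton_iff] at h
      refine ⟨E₁, by rw [← h] at hE; exact hE, ?_, by rw [h, Set.pair_comm]⟩
      have : E₁ ∈ ({E₁, E₂} : Set (Set X)) := Or.inl rfl
      rwa [← hEset] at this
  obtain ⟨w, hwΓ, hWeq⟩ := hWcomp
  have hwW : w ∈ W := hWeq ▸ mem_connectedComponentIn hwΓ
  -- U and W are disjoint
  have hUWdisj : ∀ x, x ∈ U → x ∈ W → False := by
    intro x hxU hxW
    apply hWU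
    rw [hUeq] at hxU; rw [hWeq] at hxW
    rw [hWeq, hUeq]
    exact (connectedComponentIn_eq hxW).trans (connectedComponentIn_eq hxU).symm
  -- every point off Γ is in U or W
  have hcover : ∀ x, x ∉ Γ → x ∈ U ∨ x ∈ W := by
    intro x hx
    have hxc : connectedComponentIn Γᶜ x ∈ {D | IsComponentOf D Γᶜ} := ⟨x, hx, rfl⟩
    rw [hEset, hpair] at hxc
    have hmem : x ∈ connectedComponentIn Γᶜ x := mem_connectedComponentIn hx
    rcases hxc with h | h
    · exact Or.inl (h ▸ hmem)
    · rw [mem_singleton_iff] at h; exact Or.inr (h ▸ hmem)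
  -- frontier U = Γ, so closure U ⊆ U ∪ Γ, so C ⊆ U ∪ Γ
  have hfrU : frontier U = Γ := hfrΓ U hUcomp
  have hCsub : C ⊆ U ∪ Γ := by
    intro x hx
    have := hCU hx
    rw [closure_eq_self_union_frontier, hfrU] at this
    exact this
  -- W misses C
  have hWsubΓc : W ⊆ Γᶜ := hWeq ▸ connectedComponentIn_subset Γᶜ w
  have hWC : ∀ x, x ∈ W → x ∉ C := by
    intro x hxW hxC
    rcases hCsub hxC with h | h
    · exact hUWdisj x h hxW
    · exact hWsubΓc hxW h
  have hwC : w ∈ Cᶜ := hWC w hwW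
  -- W ⊆ the component V₂ of Cᶜ containing w
  have hWconn : IsConnected W := hWeq ▸ (isConnected_connectedComponentIn_iff.2 hwΓ)
  have hWsubV₂ : W ⊆ connectedComponentIn Cᶜ w :=
    hWconn.isPreconnected.subset_connectedComponentIn hwW (fun x hx => hWC x hx)
  set V₂ := connectedComponentIn Cᶜ w with hV₂def
  have hV₂comp : IsComponentOf V₂ Cᶜ := ⟨w, hwC, rfl⟩
  have hV₂mem : V₂ ∈ ({F₁, F₂} : Set (Set X)) := by rw [← hFset]; exact hV₂comp
  -- the other component V₁ of Cᶜ
  obtain ⟨V₁, hV₁V₂, hV₁comp⟩ : ∃ V₁, V₁ ≠ V₂ ∧ IsComponentOf V₁ Cᶜ := by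
    rcases hV₂mem with h | h
    · refine ⟨F₂, by rw [← h] at hF; exact fun e => hF e.symm, ?_⟩
      have : F₂ ∈ ({F₁, F₂} : Set (Set X)) := Or.inr rfl
      rwa [← hFset] at this
    · rw [mem_singleton_iff] at h
      refine ⟨F₁, by rw [← h] at hF; exact hF, ?_⟩
      have : F₁ ∈ ({F₁, F₂} : Set (Set X)) := Or.inl rfl
      rwa [← hFset] at this
  obtain ⟨v, hvC, hV₁eq⟩ := hV₁comp
  have hvV₁ : v ∈ V₁ := hV₁eq ▸ mem_connectedComponentIn hvC
  -- V₁ and V₂ are disjoint, hence V₁ misses W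
  have hV₁V₂disj : ∀ x, x ∈ V₁ → x ∈ V₂ → False := by
    intro x hx1 hx2
    apply hV₁V₂
    rw [hV₁eq] at hx1; rw [hV₂def] at hx2
    rw [hV₁eq, hV₂def]
    exact (connectedComponentIn_eq hx1).trans (connectedComponentIn_eq hx2).symm
  have hV₁W : ∀ x, x ∈ V₁ → x ∉ W := fun x hx hxW => hV₁V₂disj x hx (hWsubV₂ hxW)
  -- C is closed, so Cᶜ is open, so V₁ is open
  have hCclosed : IsClosed C := by
    obtain ⟨f, hf, _, hfr⟩ := hC
    rw [← hfr]; exact (isCompact_range hf).isClosed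
  have hV₁open : IsOpen V₁ := hV₁eq ▸ hCclosed.isOpen_compl.connectedComponentIn
  -- V₁ misses closure W ⊇ Γ
  have hclW : closure W ⊆ V₁ᶜ :=
    closure_minimal (fun x hx hxV₁ => hV₁W x hxV₁ hx) (hV₁open.isClosed_compl)
  have hfrW : frontier W = Γ := hfrΓ W ⟨w, hwΓ, hWeq⟩
  have hV₁Γ : ∀ x, x ∈ V₁ → x ∉ Γ := by
    intro x hx hxΓ
    exact hclW (by rw [← hfrW] at hxΓ; exact frontier_subset_closure hxΓ) hx
  have hV₁subCc : V₁ ⊆ Cᶜ := hV₁eq ▸ connectedComponentIn_subset Cᶜ v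
  -- v must be in U
  have hvU : v ∈ U := by
    have hvΓ : v ∉ Γ := hV₁Γ v hvV₁
    rcases hcover v hvΓ with h | h
    · exact h
    · exact absurd h (hV₁W v hvV₁)
  -- V₁ is connected, contained in Γᶜ, and meets U: so V₁ ⊆ U
  have hV₁conn : IsConnected V₁ := hV₁eq ▸ (isConnected_connectedComponentIn_iff.2 hvC)
  have hsub : V₁ ⊆ connectedComponentIn Γᶜ v :=
    hV₁conn.isPreconnected.subset_connectedComponentIn hvV₁ (fun x hx => hV₁Γ x hx)
  have : connectedComponentIn Γᶜ v = U := by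
    rw [hUeq] at hvU ⊢
    exact (connectedComponentIn_eq hvU).symm
  exact ⟨V₁, ⟨v, hvC, hV₁eq⟩, this ▸ hsub⟩
end

section
/- (Simplification of paths) Let X be a Hausdorff topological space and let α : [0,1] → X be a continuous path with α(0) ≠ α(1). Then there exists an injective continuous path β : [0,1] → X such that β(0) = α(0), β(1) = α(1), and the image β([0,1]) is contained in the image α([0,1]). -/
open Set Topology

section SimplificationAux
set_option linter.unusedSectionVars false
open Set Topology MeasureTheory Filter
open scoped ENNReal NNReal

abbrev CantorG : Type := ℕ → ZMod 2

noncomputable instance : MeasurableSpace CantorG := borel _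
instance : BorelSpace CantorG := ⟨rfl⟩

instance : (𝓝[≠] (0 : CantorG)).NeBot := by
  have hx : Filter.Tendsto (fun n : ℕ => (fun m : ℕ => if m = n then (1 : ZMod 2) else 0))
      Filter.atTop (𝓝 (0 : CantorG)) := by
    rw [tendsto_pi_nhds]
    intro m
    apply tendsto_nhds_of_eventually_eq
    filter_upwards [Filter.eventually_gt_atTop m] with n hn
    simp [Nat.ne_of_lt hn]
  have hne : ∀ n : ℕ, (fun m : ℕ => if m = n then (1 : ZMod 2) else 0) ≠ (0 : CantorG) := by
    intro n h
    have := congrFun h n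
    simp at this
  have : Tendsto (fun n : ℕ => (fun m : ℕ => if m = n then (1 : ZMod 2) else 0)) atTop
      (𝓝[≠] (0:CantorG)) := by
    apply tendsto_nhdsWithin_of_tendsto_nhds_of_eventually_within _ hx
    filter_upwards with n using hne n
  exact this.neBot

/-- continuous injection from the Cantor group into ℕ → Bool -/
noncomputable def cantorToBool : CantorG → (ℕ → Bool) := fun g n => g n = 1

lemma cantorToBool_cont : Continuous cantorToBool := by
  apply continuous_pi
  intro n
  exact (continuous_of_discreteTopology (f := fun z : ZMod 2 => decide (z = 1))).comp
    (continuous_apply n)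

lemma cantorToBool_inj : Function.Injective cantorToBool := by
  intro a b hab
  funext n
  have := congrFun hab n
  simp only [cantorToBool, decide_eq_decide] at this
  revert this
  generalize a n = x; generalize b n = y
  revert x y; decide

/-- On a nonempty perfect subset of `[0,1]`, there is a finite atomless measure
with null complement which is positive on every open set meeting `A`. -/
lemma exists_good_measure {A : Set ℝ} (hA : Perfect A) (hne : A.Nonempty) :
    ∃ ν : Measure ℝ, IsFiniteMeasure ν ∧ NoAtoms ν ∧ ν Aᶜ = 0 ∧
      ∀ U : Set ℝ, IsOpen U → (U ∩ A).Nonempty → 0 < ν U := by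
  have : Nonempty ↥A := hne.to_subtype
  obtain ⟨d, hd⟩ : ∃ d : ℕ → ↥A, DenseRange d := ⟨TopologicalSpace.denseSeq ↥A,
    TopologicalSpace.denseRange_denseSeq ↥A⟩
  -- the pieces
  have hperf : ∀ p : ℕ × ℕ,
      Perfect (closure (Metric.ball (d p.1 : ℝ) (1/(p.2+1)) ∩ A)) := fun p =>
    (hA.acc.open_inter Metric.isOpen_ball).perfect_closure
  have hpne : ∀ p : ℕ × ℕ,
      (closure (Metric.ball (d p.1 : ℝ) (1/(p.2+1)) ∩ A)).Nonempty := fun p =>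
    ⟨d p.1, subset_closure ⟨Metric.mem_ball_self (by positivity), (d p.1).2⟩⟩
  have hsubA : ∀ p : ℕ × ℕ,
      closure (Metric.ball (d p.1 : ℝ) (1/(p.2+1)) ∩ A) ⊆ A := fun p =>
    closure_minimal inter_subset_right hA.closed
  have hsubB : ∀ p : ℕ × ℕ,
      closure (Metric.ball (d p.1 : ℝ) (1/(p.2+1)) ∩ A) ⊆
        Metric.closedBall (d p.1 : ℝ) (1/(p.2+1)) := fun p =>
    closure_minimal (inter_subset_left.trans Metric.ball_subset_closedBall)
      Metric.isClosed_closedBall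
  choose f hfr hfc hfi using fun p : ℕ × ℕ => (hperf p).exists_nat_bool_injection (hpne p)
  set g : ℕ × ℕ → CantorG → ℝ := fun p => f p ∘ cantorToBool with hg
  have hgc : ∀ p, Continuous (g p) := fun p => (hfc p).comp cantorToBool_cont
  have hgm : ∀ p, Measurable (g p) := fun p => (hgc p).measurable
  have hgi : ∀ p, Function.Injective (g p) := fun p => (hfi p).comp cantorToBool_inj
  have hgr : ∀ p, range (g p) ⊆ closure (Metric.ball (d p.1 : ℝ) (1/(p.2+1)) ∩ A) :=
    fun p => (range_comp_subset_range _ _).trans (hfr p)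
  set μH : Measure CantorG := MeasureTheory.Measure.addHaar with hμH
  have hμHuniv0 : μH univ ≠ 0 := by
    simpa using (IsOpen.measure_ne_zero (μ := μH) isOpen_univ univ_nonempty)
  have hμHunivtop : μH univ ≠ ⊤ := measure_ne_top _ _
  set w : ℕ × ℕ → ℝ≥0∞ := fun p => (2:ℝ≥0∞)⁻¹ ^ p.1 * (2:ℝ≥0∞)⁻¹ ^ p.2 * (μH univ)⁻¹ with hw
  have hwpos : ∀ p, 0 < w p := by
    intro p
    refine ENNReal.mul_pos (ENNReal.mul_pos ?_ ?_).ne' (ENNReal.inv_ne_zero.2 hμHunivtop)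
    · exact pow_ne_zero _ (by simp)
    · exact pow_ne_zero _ (by simp)
  set ν : Measure ℝ := Measure.sum (fun p : ℕ × ℕ => w p • Measure.map (g p) μH) with hν
  have hmap_apply : ∀ p (s : Set ℝ), MeasurableSet s →
      Measure.map (g p) μH s = μH ((g p) ⁻¹' s) := fun p s hs =>
    Measure.map_apply (hgm p) hs
  have hν_apply : ∀ (s : Set ℝ), MeasurableSet s →
      ν s = ∑' p : ℕ × ℕ, w p * μH ((g p) ⁻¹' s) := by
    intro s hs
    rw [hν, Measure.sum_apply _ hs]
    congr 1; funext p
    rw [Measure.smul_apply, hmap_apply p s hs, smul_eq_mul]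
  have hwsum : ∑' p : ℕ × ℕ, w p * μH univ ≠ ⊤ := by
    have heq : ∀ p : ℕ × ℕ, w p * μH univ = (2:ℝ≥0∞)⁻¹ ^ p.1 * (2:ℝ≥0∞)⁻¹ ^ p.2 := by
      intro p
      rw [hw]
      dsimp only
      rw [mul_assoc, ENNReal.inv_mul_cancel hμHuniv0 hμHunivtop, mul_one]
    simp_rw [heq]
    rw [ENNReal.tsum_prod']
    simp_rw [ENNReal.tsum_mul_left]
    rw [ENNReal.tsum_mul_right, ENNReal.tsum_geometric, ENNReal.one_sub_inv_two, inv_inv]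
    exact (ENNReal.mul_ne_top (by simp) (by simp))
  refine ⟨ν, ?_, ?_, ?_, ?_⟩
  · constructor
    rw [hν_apply univ MeasurableSet.univ]
    simp only [preimage_univ]
    exact hwsum.lt_top
  · constructor
    intro x
    rw [hν_apply {x} (measurableSet_singleton x)]
    have : ∀ p : ℕ × ℕ, μH ((g p) ⁻¹' {x}) = 0 := by
      intro p
      have hsub : ((g p) ⁻¹' {x}).Subsingleton := by
        intro a ha b hb
        exact hgi p (by simpa using ha.trans hb.symm)
      rcases hsub.eq_empty_or_singleton with h | ⟨y, h⟩
      · simp [h]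
      · simp [h]
    simp [this]
  · rw [hν_apply Aᶜ hA.closed.measurableSet.compl]
    have : ∀ p : ℕ × ℕ, (g p) ⁻¹' Aᶜ = ∅ := by
      intro p
      rw [eq_empty_iff_forall_notMem]
      intro x hx
      exact hx (hsubA p (hgr p (mem_range_self x)))
    simp [this]
  · intro U hU ⟨x, hxU, hxA⟩
    obtain ⟨ε, hε, hball⟩ := Metric.isOpen_iff.1 hU x hxU
    obtain ⟨k, hk⟩ := exists_nat_one_div_lt (show (0:ℝ) < ε/3 by linarith)
    obtain ⟨n, hn⟩ : ∃ n, dist (⟨x, hxA⟩ : ↥A) (d n) < 1/(k+1) :=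
      Metric.denseRange_iff.1 hd ⟨x, hxA⟩ (1/(k+1)) (by positivity)
    have hCU : closure (Metric.ball ((d n : ℝ)) (1/(k+1)) ∩ A) ⊆ U := by
      refine (hsubB (n, k)).trans ?_
      intro y hy
      apply hball
      have h1 : dist y x ≤ dist y (d n : ℝ) + dist ((d n : ℝ)) x := dist_triangle _ _ _
      have h2 : dist ((d n : ℝ)) x < 1/(k+1) := by
        rw [dist_comm]
        simpa [Subtype.dist_eq] using hn
      have h3 : dist y ((d n : ℝ)) ≤ 1/(k+1) := Metric.mem_closedBall.1 hy
      have : (1:ℝ)/(k+1) < ε/3 := hk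
      simp only [Metric.mem_ball]
      linarith
    have : μH ((g (n,k)) ⁻¹' U) = μH univ := by
      congr 1
      rw [eq_univ_iff_forall]
      intro y
      exact hCU (hgr (n,k) (mem_range_self y))
    calc 0 < w (n,k) * μH ((g (n,k)) ⁻¹' U) := by
            rw [this]; exact ENNReal.mul_pos (hwpos _).ne' hμHuniv0
      _ ≤ ∑' p : ℕ × ℕ, w p * μH ((g p) ⁻¹' U) := ENNReal.le_tsum (n,k)
      _ = ν U := (hν_apply U hU.measurableSet).symm

section Core
variable {X : Type*} [TopologicalSpace X] [T2Space X]

/-- `A` is a "good" set for the path `γ`. -/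
def GoodSet (γ : ℝ → X) (A : Set ℝ) : Prop :=
  IsClosed A ∧ A ⊆ Icc 0 1 ∧ 0 ∈ A ∧ 1 ∈ A ∧
    ∀ s ∈ A, ∀ t ∈ A, s < t → Ioo s t ∩ A = ∅ → γ s = γ t

lemma goodSet_Icc (γ : ℝ → X) : GoodSet γ (Icc 0 1) := by
  refine ⟨isClosed_Icc, le_refl _, by simp, by simp, ?_⟩
  intro s hs t ht hst hgap
  exfalso
  have : (s+t)/2 ∈ Ioo s t ∩ Icc 0 1 := by
    constructor
    · constructor <;> nlinarith
    · constructor <;> [nlinarith [hs.1, ht.1]; nlinarith [hs.2, ht.2]]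
  rw [hgap] at this
  exact this

lemma goodSet_sInter {γ : ℝ → X} (hγ : Continuous γ) {c : Set (Set ℝ)}
    (hc : c ⊆ {A | GoodSet γ A}) (hchain : IsChain (· ⊆ ·) c) (hne : c.Nonempty) :
    GoodSet γ (⋂₀ c) := by
  obtain ⟨A₀, hA₀⟩ := hne
  have hA₀good := hc hA₀
  refine ⟨isClosed_sInter (fun A hA => (hc hA).1), (sInter_subset_of_mem hA₀).trans hA₀good.2.1,
    fun A hA => (hc hA).2.2.1, fun A hA => (hc hA).2.2.2.1, ?_⟩
  intro s hs t ht hst hgap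
  -- limiting argument
  set m : ℝ := (s + t)/2 with hm
  have hsm : s < m := by rw [hm]; linarith
  have hmt : m < t := by rw [hm]; linarith
  -- for each n, find a member of the chain avoiding the middle interval
  have hexists : ∀ n : ℕ, ∃ A ∈ c, A ∩ Icc (s + (t-s)/(n+3)) (t - (t-s)/(n+3)) = ∅ := by
    intro n
    by_contra hcon
    push_neg at hcon
    set K : Set ℝ := Icc (s + (t-s)/(n+3)) (t - (t-s)/(n+3)) with hK
    have : (⋂ A : c, ((A : Set ℝ) ∩ K)).Nonempty := by
      have : Nonempty c := ⟨⟨A₀, hA₀⟩⟩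
      apply IsCompact.nonempty_iInter_of_directed_nonempty_isCompact_isClosed
      · intro A B
        rcases hchain.total A.2 B.2 with h | h
        · exact ⟨A, Subset.rfl, inter_subset_inter_left _ h⟩
        · exact ⟨B, inter_subset_inter_left _ h, Subset.rfl⟩
      · intro A
        exact hcon A A.2
      · exact fun A => (isCompact_Icc.inter_left (hc A.2).1)
      · exact fun A => ((hc A.2).1.inter isClosed_Icc)
    obtain ⟨x, hx⟩ := this
    simp only [mem_iInter] at hx
    have hxK : x ∈ K := ((hx ⟨A₀, hA₀⟩).2)
    have hxA : x ∈ ⋂₀ c := fun A hA => (hx ⟨A, hA⟩).1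
    have hxIoo : x ∈ Ioo s t := by
      rw [hK] at hxK
      constructor
      · have h1 := hxK.1
        have : (0:ℝ) < (t-s)/(n+3) := div_pos (by linarith) (by positivity)
        linarith
      · have h2 := hxK.2
        have : (0:ℝ) < (t-s)/(n+3) := div_pos (by linarith) (by positivity)
        linarith
    have : x ∈ Ioo s t ∩ ⋂₀ c := ⟨hxIoo, hxA⟩
    rw [hgap] at this
    exact this
  choose An hAn hAnK using hexists
  -- define the sequences
  have hsmem : ∀ n, s ∈ An n := fun n => hs _ (hAn n)
  have htmem : ∀ n, t ∈ An n := fun n => ht _ (hAn n)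
  set u : ℕ → ℝ := fun n => sSup (An n ∩ Iic m) with hu
  set v : ℕ → ℝ := fun n => sInf (An n ∩ Ici m) with hv
  have hεlt : ∀ n : ℕ, (t-s)/(n+3) < (t-s)/2 := by
    intro n
    apply div_lt_div_of_pos_left (by linarith) (by norm_num) (by push_cast; linarith)
  have hεpos : ∀ n : ℕ, (0:ℝ) < (t-s)/(n+3) := fun n => div_pos (by linarith) (by positivity)
  have humem : ∀ n, u n ∈ An n ∩ Iic m := by
    intro n
    apply ((hc (hAn n)).1.inter isClosed_Iic).csSup_mem ⟨s, hsmem n, le_of_lt hsm⟩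
    exact ⟨m, fun x hx => hx.2⟩
  have hule : ∀ n, u n ≤ s + (t-s)/(n+3) := by
    intro n
    apply csSup_le (⟨s, ⟨hsmem n, le_of_lt hsm⟩⟩ : (An n ∩ Iic m).Nonempty)
    intro x hx
    by_contra hx2
    push_neg at hx2
    have : x ∈ An n ∩ Icc (s + (t-s)/(n+3)) (t - (t-s)/(n+3)) := by
      refine ⟨hx.1, le_of_lt hx2, ?_⟩
      have hε := hεlt n
      have h3 : x ≤ m := hx.2
      rw [hm] at h3
      linarith
    rw [hAnK n] at this
    exact this
  have huge : ∀ n, s ≤ u n := fun n =>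
    le_csSup ⟨m, fun x hx => hx.2⟩ ⟨hsmem n, le_of_lt hsm⟩
  have hvmem : ∀ n, v n ∈ An n ∩ Ici m := by
    intro n
    apply ((hc (hAn n)).1.inter isClosed_Ici).csInf_mem ⟨t, htmem n, le_of_lt hmt⟩
    exact ⟨m, fun x hx => hx.2⟩
  have hvge : ∀ n, t - (t-s)/(n+3) ≤ v n := by
    intro n
    apply le_csInf (⟨t, ⟨htmem n, le_of_lt hmt⟩⟩ : (An n ∩ Ici m).Nonempty)
    intro x hx
    by_contra hx2
    push_neg at hx2
    have : x ∈ An n ∩ Icc (s + (t-s)/(n+3)) (t - (t-s)/(n+3)) := by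
      refine ⟨hx.1, ?_, le_of_lt hx2⟩
      have hε := hεlt n
      have h3 : m ≤ x := hx.2
      rw [hm] at h3
      linarith
    rw [hAnK n] at this
    exact this
  have hvle : ∀ n, v n ≤ t := fun n =>
    csInf_le ⟨m, fun x hx => hx.2⟩ ⟨htmem n, le_of_lt hmt⟩
  have huv : ∀ n, u n < v n := by
    intro n
    calc u n ≤ s + (t-s)/(n+3) := hule n
      _ < t - (t-s)/(n+3) := by have := hεlt n; linarith
      _ ≤ v n := hvge n
  have hgapn : ∀ n, Ioo (u n) (v n) ∩ An n = ∅ := by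
    intro n
    rw [eq_empty_iff_forall_notMem]
    rintro x ⟨hx1, hx2⟩
    rcases le_or_gt x m with h | h
    · exact absurd (le_csSup ⟨m, fun y hy => hy.2⟩ (⟨hx2, h⟩ : x ∈ An n ∩ Iic m)) (not_le.2 hx1.1)
    · exact absurd (csInf_le ⟨m, fun y hy => hy.2⟩
        (⟨hx2, le_of_lt h⟩ : x ∈ An n ∩ Ici m)) (not_le.2 hx1.2)
  have hγeq : ∀ n, γ (u n) = γ (v n) := by
    intro n
    exact (hc (hAn n)).2.2.2.2 (u n) (humem n).1 (v n) (hvmem n).1 (huv n) (hgapn n)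
  -- limits
  have htendsto : Filter.Tendsto (fun n : ℕ => (t-s)/(n+3)) Filter.atTop (𝓝 0) := by
    apply Filter.Tendsto.div_atTop tendsto_const_nhds
    apply Filter.tendsto_atTop_add_const_right _ 3
    exact tendsto_natCast_atTop_atTop
  have hutend : Filter.Tendsto u Filter.atTop (𝓝 s) := by
    apply tendsto_of_tendsto_of_tendsto_of_le_of_le (tendsto_const_nhds) ?_ huge hule
    simpa using tendsto_const_nhds.add htendsto
  have hvtend : Filter.Tendsto v Filter.atTop (𝓝 t) := by
    apply tendsto_of_tendsto_of_tendsto_of_le_of_le ?_ (tendsto_const_nhds) hvge hvle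
    simpa using tendsto_const_nhds.sub htendsto
  have h1 : Filter.Tendsto (fun n => γ (u n)) Filter.atTop (𝓝 (γ s)) :=
    (hγ.continuousAt.tendsto).comp hutend
  have h2 : Filter.Tendsto (fun n => γ (u n)) Filter.atTop (𝓝 (γ t)) := by
    have := (hγ.continuousAt.tendsto).comp hvtend
    simpa only [Function.comp_def, ← hγeq] using this
  exact tendsto_nhds_unique h1 h2

lemma exists_minimal_goodSet {γ : ℝ → X} (hγ : Continuous γ) :
    ∃ A, Minimal (· ∈ {A | GoodSet γ A}) A := by
  obtain ⟨m, -, hm⟩ := zorn_superset_nonempty {A | GoodSet γ A}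
    (fun c hc hchain hne => ⟨⋂₀ c, goodSet_sInter hγ hc hchain hne,
      fun s hs => sInter_subset_of_mem hs⟩) _ (goodSet_Icc γ)
  exact ⟨m, hm⟩

lemma minimal_goodSet_gap {γ : ℝ → X} {A : Set ℝ}
    (hmin : Minimal (· ∈ {A | GoodSet γ A}) A) :
    ∀ s ∈ A, ∀ t ∈ A, s < t → γ s = γ t → Ioo s t ∩ A = ∅ := by
  intro s hsA t htA hst hγst
  have hgood : GoodSet γ A := hmin.1
  have hA' : GoodSet γ (A \ Ioo s t) := by
    refine ⟨hgood.1.inter (isOpen_Ioo.isClosed_compl), diff_subset.trans hgood.2.1, ?_, ?_, ?_⟩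
    · exact ⟨hgood.2.2.1, fun hmem => absurd ((hgood.2.1 hsA).1) (not_le.2 hmem.1)⟩
    · exact ⟨hgood.2.2.2.1, fun hmem => absurd ((hgood.2.1 htA).2) (not_le.2 hmem.2)⟩
    · intro u hu v hv huv hgap
      by_cases hIv : Ioo u v ∩ A = ∅
      · exact hgood.2.2.2.2 u hu.1 v hv.1 huv hIv
      · obtain ⟨w, hw1, hw2⟩ := nonempty_iff_ne_empty.2 hIv
        have hwst : w ∈ Ioo s t := by
          by_contra hwst
          exact (eq_empty_iff_forall_notMem.1 hgap w) ⟨hw1, hw2, hwst⟩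
        have hsA' : s ∈ A \ Ioo s t := ⟨hsA, fun hm => absurd hm.1 (lt_irrefl s)⟩
        have htA' : t ∈ A \ Ioo s t := ⟨htA, fun hm => absurd hm.2 (lt_irrefl t)⟩
        have hsnotin : s ∉ Ioo u v := fun hm =>
          (eq_empty_iff_forall_notMem.1 hgap s) ⟨hm, hsA'⟩
        have htnotin : t ∉ Ioo u v := fun hm =>
          (eq_empty_iff_forall_notMem.1 hgap t) ⟨hm, htA'⟩
        simp only [mem_Ioo, not_and, not_lt] at hsnotin htnotin
        have hunotin := hu.2
        have hvnotin := hv.2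
        simp only [mem_Ioo, not_and, not_lt] at hunotin hvnotin
        have hus : u = s := by
          have h1 : s ≤ u := by
            by_contra hcon
            push_neg at hcon
            exact absurd (hsnotin hcon) (not_le.2 (hw1.2.trans' hwst.1))
          have h2 : u ≤ s := by
            by_contra hcon
            push_neg at hcon
            exact absurd (hunotin hcon) (not_le.2 (hw1.1.trans hwst.2))
          linarith
        have hvt : v = t := by
          have h1 : v ≤ t := by
            by_contra hcon
            push_neg at hcon
            exact absurd (htnotin (hw1.1.trans hwst.2)) (not_le.2 hcon)
          have h2 : t ≤ v := by
            by_contra hcon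
            push_neg at hcon
            exact absurd (hvnotin (hw1.2.trans' hwst.1)) (not_le.2 hcon)
          linarith
        rw [hus, hvt]
        exact hγst
  have hsub : A ⊆ A \ Ioo s t := hmin.2 hA' diff_subset
  rw [eq_empty_iff_forall_notMem]
  rintro x ⟨hx1, hx2⟩
  exact (hsub hx2).2 hx1

lemma minimal_goodSet_preperfect {γ : ℝ → X} {A : Set ℝ}
    (hmin : Minimal (· ∈ {A | GoodSet γ A}) A)
    (h0 : ∀ t ∈ Ioc (0:ℝ) 1, γ t ≠ γ 0) (h1 : ∀ t ∈ Ico (0:ℝ) 1, γ t ≠ γ 1) :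
    Preperfect A := by
  have hgood : GoodSet γ A := hmin.1
  obtain ⟨hclosed, hsub, h0A, h1A, hprop⟩ := hgood
  intro x hxA
  rw [accPt_iff_nhds]
  intro U hU
  by_contra hcon
  push_neg at hcon
  obtain ⟨δ, hδpos, hball⟩ := Metric.mem_nhds_iff.1 hU
  have hiso : ∀ y ∈ A, y ≠ x → δ ≤ |y - x| := by
    intro y hy hyx
    by_contra hlt
    push_neg at hlt
    exact hyx (hcon y ⟨hball (by simpa [Real.dist_eq] using hlt), hy⟩)
  have hx01 : x ∈ Icc (0:ℝ) 1 := hsub hxA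
  rcases eq_or_ne x 0 with hx0 | hx0
  · -- x = 0
    subst hx0
    have hδ1 : δ ≤ 1 := by simpa using hiso 1 h1A (by norm_num)
    set b := sInf (A ∩ Ici δ) with hb
    have hbmem : b ∈ A ∩ Ici δ := by
      apply (hclosed.inter isClosed_Ici).csInf_mem
        (⟨1, ⟨h1A, hδ1⟩⟩ : (A ∩ Ici δ).Nonempty)
      exact ⟨0, fun y hy => (hsub hy.1).1⟩
    have hbpos : 0 < b := lt_of_lt_of_le hδpos hbmem.2
    have hgap : Ioo 0 b ∩ A = ∅ := by
      rw [eq_empty_iff_forall_notMem]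
      rintro y ⟨hy1, hy2⟩
      have hyδ : δ ≤ y := by
        have := hiso y hy2 (ne_of_gt hy1.1)
        rw [sub_zero, abs_of_pos hy1.1] at this
        exact this
      exact absurd (csInf_le (⟨0, fun z hz => (hsub hz.1).1⟩ : BddBelow (A ∩ Ici δ))
        ⟨hy2, hyδ⟩) (not_le.2 hy1.2)
    exact h0 b ⟨hbpos, (hsub hbmem.1).2⟩ (hprop 0 h0A b hbmem.1 hbpos hgap).symm
  rcases eq_or_ne x 1 with hx1 | hx1
  · -- x = 1
    subst hx1
    have hδ1 : δ ≤ 1 := by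
      have := hiso 0 h0A (by norm_num)
      rw [zero_sub, abs_neg, abs_one] at this
      exact this
    set a := sSup (A ∩ Iic (1-δ)) with ha
    have hamem : a ∈ A ∩ Iic (1-δ) := by
      apply (hclosed.inter isClosed_Iic).csSup_mem
        (⟨0, ⟨h0A, mem_Iic.2 (by linarith)⟩⟩ : (A ∩ Iic (1-δ)).Nonempty)
      exact ⟨1, fun y hy => (hsub hy.1).2⟩
    have halt : a < 1 := lt_of_le_of_lt hamem.2 (by linarith)
    have hgap : Ioo a 1 ∩ A = ∅ := by
      rw [eq_empty_iff_forall_notMem]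
      rintro y ⟨hy1, hy2⟩
      have hyδ : y ≤ 1 - δ := by
        have := hiso y hy2 (ne_of_lt hy1.2)
        rw [abs_of_neg (sub_neg.mpr hy1.2)] at this
        linarith
      exact absurd (le_csSup (⟨1, fun z hz => (hsub hz.1).2⟩ : BddAbove (A ∩ Iic (1-δ)))
        ⟨hy2, hyδ⟩) (not_le.2 hy1.1)
    exact h1 a ⟨(hsub hamem.1).1, halt⟩ (hprop a hamem.1 1 h1A halt hgap)
  · -- 0 < x < 1
    have hx0' : 0 < x := lt_of_le_of_ne hx01.1 (Ne.symm hx0)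
    have hx1' : x < 1 := lt_of_le_of_ne hx01.2 hx1
    set δ' := min δ (min x (1-x)) with hδ'
    have hδ'pos : 0 < δ' := lt_min hδpos (lt_min hx0' (by linarith))
    have hδ'δ : δ' ≤ δ := min_le_left _ _
    have hδ'x : δ' ≤ x := (min_le_right _ _).trans (min_le_left _ _)
    have hδ'1x : δ' ≤ 1 - x := (min_le_right _ _).trans (min_le_right _ _)
    set a := sSup (A ∩ Iic (x - δ')) with ha
    have hamem : a ∈ A ∩ Iic (x - δ') := by
      apply (hclosed.inter isClosed_Iic).csSup_mem
        (⟨0, ⟨h0A, mem_Iic.2 (by linarith)⟩⟩ : (A ∩ Iic (x - δ')).Nonempty)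
      exact ⟨x, fun y hy => hy.2.trans (by linarith)⟩
    have hax : a < x := lt_of_le_of_lt hamem.2 (by linarith)
    set b := sInf (A ∩ Ici (x + δ')) with hbdef
    have hbmem : b ∈ A ∩ Ici (x + δ') := by
      apply (hclosed.inter isClosed_Ici).csInf_mem
        (⟨1, ⟨h1A, mem_Ici.2 (by linarith)⟩⟩ : (A ∩ Ici (x + δ')).Nonempty)
      exact ⟨x, fun y hy => (le_of_lt (by linarith)).trans hy.2⟩
    have hxb : x < b := lt_of_lt_of_le (by linarith) hbmem.2
    have hgapa : Ioo a x ∩ A = ∅ := by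
      rw [eq_empty_iff_forall_notMem]
      rintro y ⟨hy1, hy2⟩
      have hyδ : y ≤ x - δ' := by
        rcases eq_or_ne y x with h | h
        · exact absurd h (ne_of_lt hy1.2)
        · have := hiso y hy2 h
          rw [abs_of_neg (sub_neg.mpr hy1.2)] at this
          linarith
      exact absurd (le_csSup (⟨x, fun z hz => hz.2.trans (by linarith)⟩ :
        BddAbove (A ∩ Iic (x - δ'))) ⟨hy2, hyδ⟩) (not_le.2 hy1.1)
    have hgapb : Ioo x b ∩ A = ∅ := by
      rw [eq_empty_iff_forall_notMem]
      rintro y ⟨hy1, hy2⟩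
      have hyδ : x + δ' ≤ y := by
        rcases eq_or_ne y x with h | h
        · exact absurd h (ne_of_gt hy1.1)
        · have := hiso y hy2 h
          rw [abs_of_pos (sub_pos.mpr hy1.1)] at this
          linarith
      exact absurd (csInf_le (⟨x, fun z hz => (le_of_lt (by linarith)).trans hz.2⟩ :
        BddBelow (A ∩ Ici (x + δ'))) ⟨hy2, hyδ⟩) (not_le.2 hy1.2)
    have hab : γ a = γ b :=
      (hprop a hamem.1 x hxA hax hgapa).trans (hprop x hxA b hbmem.1 hxb hgapb)
    have := minimal_goodSet_gap hmin a hamem.1 b hbmem.1 (hax.trans hxb) hab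
    exact (eq_empty_iff_forall_notMem.1 this x) ⟨⟨hax, hxb⟩, hxA⟩

lemma core_lemma (γ : ℝ → X) (hγ : Continuous γ)
    (h0 : ∀ t ∈ Ioc (0:ℝ) 1, γ t ≠ γ 0) (h1 : ∀ t ∈ Ico (0:ℝ) 1, γ t ≠ γ 1) :
    ∃ β : unitInterval → X, Continuous β ∧ Function.Injective β ∧
      β 0 = γ 0 ∧ β 1 = γ 1 ∧ range β ⊆ γ '' Icc 0 1 := by
  obtain ⟨A, hmin⟩ := exists_minimal_goodSet hγ
  obtain ⟨hclosed, hsub, h0A, h1A, hprop⟩ := hmin.1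
  have hperf : Perfect A := ⟨hclosed, minimal_goodSet_preperfect hmin h0 h1⟩
  obtain ⟨ν, hfin, hatom, hnull, hpos⟩ := exists_good_measure hperf ⟨0, h0A⟩
  haveI := hfin
  haveI : NullSingletonClass ν := hatom
  set F : ℝ → ℝ := fun t => (ν (Iic t)).toReal with hF
  have hFmono : Monotone F := fun s t hst =>
    ENNReal.toReal_mono (measure_ne_top _ _) (measure_mono (Iic_subset_Iic.2 hst))
  have hF0 : F 0 = 0 := by
    have hsub0 : Iic (0:ℝ) ⊆ Aᶜ ∪ {0} := by
      intro y hy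
      by_cases hyA : y ∈ A
      · exact Or.inr (le_antisymm hy (hsub hyA).1)
      · exact Or.inl hyA
    have : ν (Iic (0:ℝ)) = 0 := by
      refine le_antisymm ?_ (zero_le)
      calc ν (Iic (0:ℝ)) ≤ ν (Aᶜ ∪ {0}) := measure_mono hsub0
        _ ≤ ν Aᶜ + ν {0} := measure_union_le _ _
        _ = 0 := by rw [hnull, measure_singleton]; simp
    show (ν (Iic (0:ℝ))).toReal = 0
    rw [this]
    simp
  have hFgap : ∀ s t : ℝ, s ≤ t → Ioo s t ∩ A = ∅ → F s = F t := by
    intro s t hst hgap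
    have hIoosub : Ioo s t ⊆ Aᶜ := by
      intro y hy
      intro hyA
      exact (eq_empty_iff_forall_notMem.1 hgap y) ⟨hy, hyA⟩
    rcases eq_or_lt_of_le hst with rfl | hlt
    · rfl
    have h1 : ν (Iic t) ≤ ν (Iic s) := by
      calc ν (Iic t) = ν (Iic s ∪ Ioc s t) := by rw [Iic_union_Ioc_eq_Iic hst]
        _ ≤ ν (Iic s) + ν (Ioc s t) := measure_union_le _ _
        _ ≤ ν (Iic s) + (ν (Ioo s t) + ν {t}) := by
            gcongr
            rw [show Ioc s t = Ioo s t ∪ {t} from (Ioo_union_right hlt).symm]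
            exact measure_union_le _ _
        _ = ν (Iic s) := by
            rw [measure_singleton, measure_mono_null hIoosub hnull]
            simp
    exact le_antisymm (hFmono hst) (ENNReal.toReal_mono (measure_ne_top _ _) h1)
  have hFlt : ∀ s t : ℝ, s < t → (Ioo s t ∩ A).Nonempty → F s < F t := by
    intro s t hst hne
    have hdisj : Disjoint (Iic s) (Ioo s t) := by
      rw [disjoint_left]
      intro y hy1 hy2
      exact absurd hy2.1 (not_lt.2 hy1)
    have hsubU : Iic s ∪ Ioo s t ⊆ Iic t := by
      rintro y (hy | hy)
      · exact hy.trans (le_of_lt hst)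
      · exact le_of_lt hy.2
    have h1 : ν (Iic s) + ν (Ioo s t) ≤ ν (Iic t) := by
      rw [← measure_union hdisj measurableSet_Ioo]
      exact measure_mono hsubU
    have hIoopos : 0 < ν (Ioo s t) := hpos _ isOpen_Ioo hne
    have h2 : F s + (ν (Ioo s t)).toReal ≤ F t := by
      rw [hF]
      rw [← ENNReal.toReal_add (measure_ne_top _ _) (measure_ne_top _ _)]
      exact ENNReal.toReal_mono (measure_ne_top _ _) h1
    have h3 : 0 < (ν (Ioo s t)).toReal :=
      ENNReal.toReal_pos (ne_of_gt hIoopos) (measure_ne_top _ _)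
    linarith
  have hFcont : Continuous F := by
    rw [Metric.continuous_iff]
    intro x ε hε
    have hInter : (⋂ n : ℕ, Iic (x + 1/(n+1))) = Iic x := by
      ext y
      simp only [mem_iInter, mem_Iic]
      constructor
      · intro hy
        by_contra hcon
        push_neg at hcon
        obtain ⟨n, hn⟩ := exists_nat_one_div_lt (show (0:ℝ) < y - x by linarith)
        have := hy n
        linarith
      · intro hy n
        have : (0:ℝ) < 1/(n+1) := by positivity
        linarith
    have hUnion : (⋃ n : ℕ, Iic (x - 1/(n+1))) = Iio x := by
      ext y
      simp only [mem_iUnion, mem_Iic, mem_Iio]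
      constructor
      · rintro ⟨n, hn⟩
        have : (0:ℝ) < 1/(n+1) := by positivity
        linarith
      · intro hy
        obtain ⟨n, hn⟩ := exists_nat_one_div_lt (show (0:ℝ) < x - y by linarith)
        exact ⟨n, by linarith⟩
    have hrt : Filter.Tendsto (fun n : ℕ => ν (Iic (x + 1/(n+1)))) Filter.atTop
        (𝓝 (ν (Iic x))) := by
      have := tendsto_measure_iInter_atTop (μ := ν) (s := fun n : ℕ => Iic (x + 1/(n+1)))
        (fun n => measurableSet_Iic.nullMeasurableSet)
        (fun i j hij => Iic_subset_Iic.2 (by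
          have : (1:ℝ)/(j+1) ≤ 1/(i+1) := by
            apply div_le_div_of_nonneg_left (by norm_num) (by positivity)
              (by have := (Nat.cast_le (α := ℝ)).2 hij; linarith)
          linarith)) ⟨0, measure_ne_top _ _⟩
      rwa [hInter] at this
    have hlt : Filter.Tendsto (fun n : ℕ => ν (Iic (x - 1/(n+1)))) Filter.atTop
        (𝓝 (ν (Iic x))) := by
      have := tendsto_measure_iUnion_atTop (μ := ν) (s := fun n : ℕ => Iic (x - 1/(n+1)))
        (fun i j hij => Iic_subset_Iic.2 (by
          have : (1:ℝ)/(j+1) ≤ 1/(i+1) := by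
            apply div_le_div_of_nonneg_left (by norm_num) (by positivity)
              (by have := (Nat.cast_le (α := ℝ)).2 hij; linarith)
          linarith))
      rw [hUnion] at this
      rwa [measure_congr (Iio_ae_eq_Iic)] at this
    have hrt' : Filter.Tendsto (fun n : ℕ => F (x + 1/(n+1))) Filter.atTop (𝓝 (F x)) :=
      (ENNReal.tendsto_toReal (measure_ne_top _ _)).comp hrt
    have hlt' : Filter.Tendsto (fun n : ℕ => F (x - 1/(n+1))) Filter.atTop (𝓝 (F x)) :=
      (ENNReal.tendsto_toReal (measure_ne_top _ _)).comp hlt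
    obtain ⟨n₁, hn₁⟩ := (hrt'.eventually (gt_mem_nhds
      (show F x < F x + ε by linarith))).exists
    obtain ⟨n₂, hn₂⟩ := (hlt'.eventually (lt_mem_nhds
      (show F x - ε < F x by linarith))).exists
    refine ⟨min (1/(n₁+1)) (1/(n₂+1)), lt_min (by positivity) (by positivity), ?_⟩
    intro y hy
    rw [Real.dist_eq] at hy ⊢
    rw [abs_lt] at hy
    have hy1 : y ≤ x + 1/(n₁+1) := by
      have := min_le_left (1/(n₁+1) : ℝ) (1/(n₂+1))
      linarith [hy.2]
    have hy2 : x - 1/(n₂+1) ≤ y := by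
      have := min_le_right (1/(n₁+1) : ℝ) (1/(n₂+1))
      linarith [hy.1]
    have b1 : F y ≤ F (x + 1/(n₁+1)) := hFmono hy1
    have b2 : F (x - 1/(n₂+1)) ≤ F y := hFmono hy2
    rw [abs_lt]
    constructor <;> linarith
  set c : ℝ := F 1 with hc
  have hcpos : 0 < c := by
    have hacc := hperf.acc 0 h0A
    rw [accPt_iff_nhds] at hacc
    obtain ⟨y, ⟨hy1, hy2⟩, hy3⟩ := hacc (Ioo (-1) 1) (isOpen_Ioo.mem_nhds (by norm_num))
    have hymem : y ∈ Ioo (0:ℝ) 1 ∩ A :=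
      ⟨⟨lt_of_le_of_ne (hsub hy2).1 (Ne.symm hy3), hy1.2⟩, hy2⟩
    have := hFlt 0 1 zero_lt_one ⟨y, hymem⟩
    rw [hF0] at this
    exact this
  set Q : ℝ → ℝ := fun t => F t / c with hQ
  have hQcont : Continuous Q := hFcont.div_const c
  have hQmono : Monotone Q := fun s t hst => by
    exact div_le_div_of_nonneg_right (hFmono hst) hcpos.le
  have hQ0 : Q 0 = 0 := by rw [hQ]; simp [hF0]
  have hQ1 : Q 1 = 1 := by rw [hQ]; exact div_self hcpos.ne'
  have hQgap : ∀ s t : ℝ, s ≤ t → Ioo s t ∩ A = ∅ → Q s = Q t := by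
    intro s t hst hgap
    rw [hQ]
    simp only
    rw [hFgap s t hst hgap]
  have hQlt : ∀ s t : ℝ, s < t → (Ioo s t ∩ A).Nonempty → Q s < Q t := by
    intro s t hst hne
    rw [hQ]
    simp only
    exact div_lt_div_of_pos_right (hFlt s t hst hne) hcpos
  have hQmem : ∀ t ∈ A, Q t ∈ Icc (0:ℝ) 1 := by
    intro t ht
    constructor
    · rw [hQ]; positivity
    · rw [hQ]
      simp only
      rw [div_le_one hcpos]
      exact hFmono (hsub ht).2
  -- surjectivity onto [0,1] from A
  have hsurj : ∀ x : ℝ, 0 ≤ x → x ≤ 1 → ∃ u ∈ A, Q u = x := by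
    intro x hx0 hx1
    have hx : x ∈ Icc (Q 0) (Q 1) := by rw [hQ0, hQ1]; exact ⟨hx0, hx1⟩
    obtain ⟨u, hu, hQu⟩ := intermediate_value_Icc zero_le_one hQcont.continuousOn hx
    set T : Set ℝ := {u | u ∈ Icc (0:ℝ) 1 ∧ Q u = x} with hT
    have hTclosed : IsClosed T := by
      apply IsClosed.inter isClosed_Icc
      exact isClosed_eq hQcont continuous_const
    have hTne : T.Nonempty := ⟨u, hu, hQu⟩
    have hTbdd : BddBelow T := ⟨0, fun y hy => hy.1.1⟩
    set t₀ := sInf T with ht₀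
    have ht₀T : t₀ ∈ T := hTclosed.csInf_mem hTne hTbdd
    by_cases ht₀A : t₀ ∈ A
    · exact ⟨t₀, ht₀A, ht₀T.2⟩
    · exfalso
      set a := sSup (A ∩ Iic t₀) with ha
      have hamem : a ∈ A ∩ Iic t₀ := by
        apply (hclosed.inter isClosed_Iic).csSup_mem
          (⟨0, ⟨h0A, mem_Iic.2 ht₀T.1.1⟩⟩ : (A ∩ Iic t₀).Nonempty)
        exact ⟨t₀, fun y hy => hy.2⟩
      have hat₀ : a < t₀ := lt_of_le_of_ne hamem.2 (fun h => ht₀A (h ▸ hamem.1))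
      have hgap : Ioo a t₀ ∩ A = ∅ := by
        rw [eq_empty_iff_forall_notMem]
        rintro y ⟨hy1, hy2⟩
        exact absurd (le_csSup (⟨t₀, fun z hz => hz.2⟩ : BddAbove (A ∩ Iic t₀))
          ⟨hy2, le_of_lt hy1.2⟩) (not_le.2 hy1.1)
      have hQa : Q a = x := (hQgap a t₀ (le_of_lt hat₀) hgap).trans ht₀T.2
      have haT : a ∈ T := ⟨⟨(hsub hamem.1).1, (hsub hamem.1).2⟩, hQa⟩
      exact absurd (csInf_le hTbdd haT) (not_le.2 hat₀)
  set sec : unitInterval → ℝ := fun x => sInf {u | u ∈ A ∧ Q u = (x:ℝ)} with hsec_def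
  have hsec : ∀ x : unitInterval, sec x ∈ A ∧ Q (sec x) = (x:ℝ) := by
    intro x
    have hclosed' : IsClosed {u | u ∈ A ∧ Q u = (x:ℝ)} :=
      hclosed.inter (isClosed_eq hQcont continuous_const)
    have hne' : {u | u ∈ A ∧ Q u = (x:ℝ)}.Nonempty := by
      obtain ⟨u, hu1, hu2⟩ := hsurj x x.2.1 x.2.2
      exact ⟨u, hu1, hu2⟩
    have hbdd' : BddBelow {u | u ∈ A ∧ Q u = (x:ℝ)} := ⟨0, fun y hy => (hsub hy.1).1⟩
    exact hclosed'.csInf_mem hne' hbdd'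
  have hKeyL : ∀ s ∈ A, ∀ t ∈ A, Q s = Q t → γ s = γ t := by
    have main : ∀ s ∈ A, ∀ t ∈ A, s < t → Q s = Q t → γ s = γ t := by
      intro s hs t ht hst hQst
      by_cases hgap : Ioo s t ∩ A = ∅
      · exact hprop s hs t ht hst hgap
      · exact absurd hQst (ne_of_lt (hQlt s t hst (nonempty_iff_ne_empty.2 hgap)))
    intro s hs t ht hQst
    rcases lt_trichotomy s t with h | h | h
    · exact main s hs t ht h hQst
    · rw [h]
    · exact (main t ht s hs h hQst.symm).symm
  set β : unitInterval → X := fun x => γ (sec x) with hβ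
  have hQsec_eq : ∀ x y : unitInterval, sec x = sec y → x = y := by
    intro x y hxy
    have h1 := (hsec x).2
    have h2 := (hsec y).2
    rw [hxy] at h1
    exact Subtype.ext (h1.symm.trans h2)
  refine ⟨β, ?_, ?_, ?_, ?_, ?_⟩
  · -- continuity
    have hAcomp : IsCompact A := isCompact_Icc.of_isClosed_subset hclosed hsub
    haveI : CompactSpace ↥A := isCompact_iff_compactSpace.1 hAcomp
    set QI : ↥A → unitInterval := fun a => ⟨Q a, hQmem a a.2⟩ with hQI
    have hQIc : Continuous QI :=
      Continuous.subtype_mk (hQcont.comp continuous_subtype_val) _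
    have hQIsurj : Function.Surjective QI := by
      intro x
      exact ⟨⟨sec x, (hsec x).1⟩, Subtype.ext (hsec x).2⟩
    have hquot := hQIc.isClosedMap.isQuotientMap hQIc hQIsurj
    apply (hquot.continuous_iff).mpr
    have hcomp : β ∘ QI = γ ∘ (Subtype.val : ↥A → ℝ) := by
      funext a
      exact hKeyL (sec (QI a)) (hsec (QI a)).1 a a.2 (by rw [(hsec (QI a)).2])
    rw [hcomp]
    exact hγ.comp continuous_subtype_val
  · -- injectivity
    intro x y hxy
    rw [hβ] at hxy
    simp only at hxy
    rcases lt_trichotomy (sec x) (sec y) with h | h | h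
    · have hgap := minimal_goodSet_gap hmin (sec x) (hsec x).1 (sec y) (hsec y).1 h hxy
      have := (hQgap _ _ (le_of_lt h) hgap)
      rw [(hsec x).2, (hsec y).2] at this
      exact Subtype.ext this
    · exact hQsec_eq x y h
    · have hgap := minimal_goodSet_gap hmin (sec y) (hsec y).1 (sec x) (hsec x).1 h hxy.symm
      have := (hQgap _ _ (le_of_lt h) hgap)
      rw [(hsec x).2, (hsec y).2] at this
      exact Subtype.ext this.symm
  · -- β 0 = γ 0
    apply hKeyL (sec 0) (hsec 0).1 0 h0A
    rw [(hsec 0).2, hQ0]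
    norm_num
  · -- β 1 = γ 1
    apply hKeyL (sec 1) (hsec 1).1 1 h1A
    rw [(hsec 1).2, hQ1]
    norm_num
  · rintro _ ⟨x, rfl⟩
    exact ⟨sec x, hsub (hsec x).1, rfl⟩

end Core

end SimplificationAux

/-- **Simplification of paths.** Any continuous path in a Hausdorff space with distinct
endpoints contains a simple (injective) path with the same endpoints. -/
theorem simplification_of_paths {X : Type*} [TopologicalSpace X] [T2Space X]
    (α : unitInterval → X) (hα : Continuous α) (h : α 0 ≠ α 1) :
    ∃ β : unitInterval → X, Continuous β ∧ Function.Injective β ∧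
      β 0 = α 0 ∧ β 1 = α 1 ∧ Set.range β ⊆ Set.range α := by
  set γ₀ : ℝ → X := α ∘ (Set.projIcc 0 1 zero_le_one) with hγ₀def
  have hγ₀c : Continuous γ₀ := hα.comp continuous_projIcc
  have hγ00 : γ₀ 0 = α 0 := by
    show α (Set.projIcc 0 1 zero_le_one 0) = α 0
    rw [Set.projIcc_left]
    rfl
  have hγ01 : γ₀ 1 = α 1 := by
    show α (Set.projIcc 0 1 zero_le_one 1) = α 1
    rw [Set.projIcc_right]
    rfl
  set Z0 : Set ℝ := {t | t ∈ Icc (0:ℝ) 1 ∧ γ₀ t = γ₀ 0} with hZ0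
  have hZ0closed : IsClosed Z0 := isClosed_Icc.inter (isClosed_eq hγ₀c continuous_const)
  have hZ0ne : Z0.Nonempty := ⟨0, ⟨le_refl 0, zero_le_one⟩, rfl⟩
  have hZ0bdd : BddAbove Z0 := ⟨1, fun y hy => hy.1.2⟩
  set s₀ := sSup Z0 with hs₀
  have hs₀mem : s₀ ∈ Z0 := hZ0closed.csSup_mem hZ0ne hZ0bdd
  set Z1 : Set ℝ := {t | t ∈ Icc s₀ 1 ∧ γ₀ t = γ₀ 1} with hZ1
  have hZ1closed : IsClosed Z1 := isClosed_Icc.inter (isClosed_eq hγ₀c continuous_const)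
  have hZ1ne : Z1.Nonempty := ⟨1, ⟨hs₀mem.1.2, le_refl 1⟩, rfl⟩
  have hZ1bdd : BddBelow Z1 := ⟨s₀, fun y hy => hy.1.1⟩
  set t₀ := sInf Z1 with ht₀
  have ht₀mem : t₀ ∈ Z1 := hZ1closed.csInf_mem hZ1ne hZ1bdd
  have hne01 : γ₀ 0 ≠ γ₀ 1 := by rw [hγ00, hγ01]; exact h
  have hlt : s₀ < t₀ := by
    rcases eq_or_lt_of_le ht₀mem.1.1 with heq | hlt
    · exfalso
      apply hne01
      rw [← hs₀mem.2, heq, ht₀mem.2]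
    · exact hlt
  set γ₁ : ℝ → X := fun u => γ₀ (s₀ + u * (t₀ - s₀)) with hγ₁def
  have hγ₁c : Continuous γ₁ :=
    hγ₀c.comp (continuous_const.add (continuous_id'.mul continuous_const))
  have hγ₁0 : γ₁ 0 = γ₀ 0 := by
    show γ₀ (s₀ + 0 * (t₀ - s₀)) = γ₀ 0
    rw [zero_mul, add_zero, hs₀mem.2]
  have hγ₁1 : γ₁ 1 = γ₀ 1 := by
    show γ₀ (s₀ + 1 * (t₀ - s₀)) = γ₀ 1
    rw [one_mul]
    rw [show s₀ + (t₀ - s₀) = t₀ by ring]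
    exact ht₀mem.2
  have h0' : ∀ u ∈ Ioc (0:ℝ) 1, γ₁ u ≠ γ₁ 0 := by
    intro u hu hcon
    rw [hγ₁0] at hcon
    set v := s₀ + u * (t₀ - s₀) with hv
    have hvgt : s₀ < v := by nlinarith [hu.1, hlt]
    have hvmem : v ∈ Z0 := by
      refine ⟨⟨?_, ?_⟩, hcon⟩
      · nlinarith [hs₀mem.1.1, hu.1, hlt]
      · nlinarith [ht₀mem.1.2, hu.2, hlt]
    exact absurd (le_csSup hZ0bdd hvmem) (not_le.2 hvgt)
  have h1' : ∀ u ∈ Ico (0:ℝ) 1, γ₁ u ≠ γ₁ 1 := by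
    intro u hu hcon
    rw [hγ₁1] at hcon
    set v := s₀ + u * (t₀ - s₀) with hv
    have hvlt : v < t₀ := by nlinarith [hu.2, hlt]
    have hvmem : v ∈ Z1 := by
      refine ⟨⟨?_, ?_⟩, hcon⟩
      · nlinarith [hu.1, hlt]
      · nlinarith [ht₀mem.1.2, hu.2, hlt]
    exact absurd (csInf_le hZ1bdd hvmem) (not_le.2 hvlt)
  obtain ⟨β, hβc, hβi, hβ0, hβ1, hβr⟩ := core_lemma γ₁ hγ₁c h0' h1'
  refine ⟨β, hβc, hβi, ?_, ?_, ?_⟩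
  · rw [hβ0, hγ₁0, hγ00]
  · rw [hβ1, hγ₁1, hγ01]
  · intro x hx
    obtain ⟨u, -, hu⟩ := hβr hx
    rw [← hu]
    exact mem_range_self _
end
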